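/- arXiv:1407.6815 — 3 statements merged into one kernel-verified Lean document; each statement's English description precedes it below -/
import Mathlib

section
/- Let Q(y,z) = yz be the quadratic form on ℝ² in lightlike coordinates. Given points α₀, α₁ ∈ ℝ² with α₀ ≠ α₁, and real numbers r₀², r₁² both nonzero, the set of points γ ∈ ℝ² satisfying Q(γ - α₀) = r₀² and Q(γ - α₁) = r₁² has at most 2 elements. -/
/-- In lightlike coordinates on the Minkowski plane, the quadratic form is `Q (y,z) = y * z`.
Two distinct "hyperbolae" with nonzero radii-squared intersect in at most two points. -/
theorem minkowski_hyperbolae_intersection_card_le_two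
    (α₀ α₁ : ℝ × ℝ) (hne : α₀ ≠ α₁) (r0sq r1sq : ℝ)
    (hr0 : r0sq ≠ 0) (hr1 : r1sq ≠ 0) :
    Set.encard {γ : ℝ × ℝ |
        (γ.1 - α₀.1) * (γ.2 - α₀.2) = r0sq ∧
        (γ.1 - α₁.1) * (γ.2 - α₁.2) = r1sq} ≤ 2 := by
  set s : Set (ℝ × ℝ) := {γ : ℝ × ℝ |
        (γ.1 - α₀.1) * (γ.2 - α₀.2) = r0sq ∧
        (γ.1 - α₁.1) * (γ.2 - α₁.2) = r1sq} with hs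
  set a0 := α₀.1; set b0 := α₀.2; set a1 := α₁.1; set b1 := α₁.2
  set p := b1 - b0 with hp
  set q := a1 - a0 with hq
  set c := r0sq - r1sq - a0 * b0 + a1 * b1 with hc
  -- first coordinate determines the point
  have key : ∀ γ ∈ s, ∀ δ ∈ s, γ.1 = δ.1 → γ = δ := by
    rintro γ ⟨hγ1, _⟩ δ ⟨hδ1, _⟩ h
    have hya : γ.1 - a0 ≠ 0 := by
      intro h0; rw [h0, zero_mul] at hγ1; exact hr0 hγ1.symm
    have : (γ.1 - a0) * γ.2 = (γ.1 - a0) * δ.2 := by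
      rw [h] at hγ1 ⊢
      nlinarith [hγ1, hδ1]
    have h2 : γ.2 = δ.2 := mul_left_cancel₀ hya this
    exact Prod.ext h h2
  -- linear relation
  have lin : ∀ γ ∈ s, p * γ.1 + q * γ.2 = c := by
    rintro γ ⟨h1, h2⟩
    rw [hp, hq, hc]
    linear_combination h1 - h2
  have hpq : p ≠ 0 ∨ q ≠ 0 := by
    by_contra h
    push_neg at h
    apply hne
    have h1 : b1 = b0 := by have := h.1; rw [hp] at this; linarith
    have h2 : a1 = a0 := by have := h.2; rw [hq] at this; linarith
    exact Prod.ext h2.symm h1.symm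
  by_contra hcard
  push_neg at hcard
  -- extract three distinct points
  obtain ⟨γ₁, hγ₁⟩ := Set.nonempty_of_encard_ne_zero (s := s)
    (by intro h0; rw [h0] at hcard; exact absurd hcard (by simp))
  have h1lt : 1 < (s \ {γ₁}).encard := by
    have := Set.encard_diff_singleton_add_one hγ₁
    rw [← this] at hcard
    by_contra hle
    push_neg at hle
    have : (s \ {γ₁}).encard + 1 ≤ 1 + 1 := add_le_add hle (le_refl 1)
    exact absurd (lt_of_lt_of_le hcard this) (by norm_num)
  obtain ⟨γ₂, γ₃, hγ₂, hγ₃, h23⟩ := Set.one_lt_encard_iff.1 h1lt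
  have hγ₂s : γ₂ ∈ s := hγ₂.1
  have hγ₃s : γ₃ ∈ s := hγ₃.1
  have h12 : γ₁ ≠ γ₂ := fun h => hγ₂.2 (by simp [h.symm])
  have h13 : γ₁ ≠ γ₃ := fun h => hγ₃.2 (by simp [h.symm])
  -- first coords pairwise distinct
  have hy12 : γ₁.1 ≠ γ₂.1 := fun h => h12 (key _ hγ₁ _ hγ₂s h)
  have hy13 : γ₁.1 ≠ γ₃.1 := fun h => h13 (key _ hγ₁ _ hγ₃s h)
  have hy23 : γ₂.1 ≠ γ₃.1 := fun h => h23 (key _ hγ₂s _ hγ₃s h)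
  rcases (em (q = 0)) with hq0 | hq0
  · -- then p ≠ 0 and all first coords equal c/p
    have hp0 : p ≠ 0 := by tauto
    have l1 := lin _ hγ₁
    have l2 := lin _ hγ₂s
    rw [hq0] at l1 l2
    apply hy12
    have : p * γ₁.1 = p * γ₂.1 := by linarith
    exact mul_left_cancel₀ hp0 this
  · -- quadratic in y: (y - a0) * (c - p*y - q*b0) = q * r0sq
    have quad : ∀ γ ∈ s, (γ.1 - a0) * (c - p * γ.1 - q * b0) = q * r0sq := by
      rintro γ hγ
      have l := lin _ hγ
      obtain ⟨h1, _⟩ := hγ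
      linear_combination q * h1 - (γ.1 - a0) * l
    have q1 := quad _ hγ₁
    have q2 := quad _ hγ₂s
    have q3 := quad _ hγ₃s
    -- differences: (y_i - y_j) * (-(p)*(y_i+y_j) + (c - q*b0 + p*a0)) = 0
    have d12 : (γ₁.1 - γ₂.1) * (-p * (γ₁.1 + γ₂.1) + (c - q * b0 + p * a0)) = 0 := by
      linear_combination q1 - q2
    have d13 : (γ₁.1 - γ₃.1) * (-p * (γ₁.1 + γ₃.1) + (c - q * b0 + p * a0)) = 0 := by
      linear_combination q1 - q3
    have e12 : -p * (γ₁.1 + γ₂.1) + (c - q * b0 + p * a0) = 0 :=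
      (mul_eq_zero.1 d12).resolve_left (sub_ne_zero_of_ne hy12)
    have e13 : -p * (γ₁.1 + γ₃.1) + (c - q * b0 + p * a0) = 0 :=
      (mul_eq_zero.1 d13).resolve_left (sub_ne_zero_of_ne hy13)
    have hp0 : p = 0 := by
      by_contra hp0
      apply hy23
      have : p * γ₂.1 = p * γ₃.1 := by linarith
      exact mul_left_cancel₀ hp0 this
    -- now quadratic degenerates to linear: (y - a0)*(c - q*b0) = q*r0sq
    rw [hp0] at q1 q2
    have dl : (γ₁.1 - γ₂.1) * (c - 0 * γ₁.1 - q * b0) = 0 := by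
      by_cases hcb : c - q * b0 = 0
      · linear_combination (γ₁.1 - γ₂.1) * hcb
      · exfalso
        apply hy12
        have h1' : (γ₁.1 - a0) * (c - q * b0) = q * r0sq := by linear_combination q1
        have h2' : (γ₂.1 - a0) * (c - q * b0) = q * r0sq := by linear_combination q2
        have : (γ₁.1 - a0) * (c - q * b0) = (γ₂.1 - a0) * (c - q * b0) := by rw [h1', h2']
        have := mul_right_cancel₀ hcb this
        linarith
    have hcb : c - 0 * γ₁.1 - q * b0 = 0 :=
      (mul_eq_zero.1 dl).resolve_left (sub_ne_zero_of_ne hy12)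
    rw [show c - 0 * γ₁.1 - q * b0 = c - q * b0 by ring] at hcb
    have : q * r0sq = 0 := by linear_combination (γ₁.1 - a0) * hcb - q1
    exact (mul_ne_zero hq0 hr0) this
end

section
/- Let φ be the bilinear form φ((x,t),(x',t')) = xx' - tt' on ℝ², and define ‖α‖ ∈ ℝ≥0 ∪ i·ℝ≥0 by ‖α‖² = φ(α,α) (taking the square root with nonnegative real or nonnegative imaginary part). If α, β ∈ ℝ² satisfy ‖α‖ + ‖β‖ = ‖α + β‖ (as complex numbers), then α and β are linearly dependent. -/
/-- The Minkowski quadratic form on `ℝ²`: `q (x,t) = x² - t²`. -/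
noncomputable def minkQ (α : ℝ × ℝ) : ℝ := α.1 ^ 2 - α.2 ^ 2

/-- The Minkowski pseudo-norm, valued in `ℝ≥0 ∪ i·ℝ≥0 ⊆ ℂ`:
`√(q α)` if `q α ≥ 0`, and `i·√(-q α)` otherwise. -/
noncomputable def minkNorm (α : ℝ × ℝ) : ℂ :=
  if 0 ≤ minkQ α then (Real.sqrt (minkQ α) : ℂ)
  else Complex.I * (Real.sqrt (-minkQ α) : ℂ)

lemma minkNorm_sq (γ : ℝ × ℝ) : (minkNorm γ) ^ 2 = (minkQ γ : ℂ) := by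
  unfold minkNorm
  split_ifs with hq
  · rw [← Complex.ofReal_pow, Real.sq_sqrt hq]
  · rw [mul_pow, Complex.I_sq, ← Complex.ofReal_pow, Real.sq_sqrt (by linarith)]
    push_cast; ring

/-- Equality case of the triangle inequality in the Minkowski plane:
`‖α‖ + ‖β‖ = ‖α + β‖` forces `α` and `β` to be linearly dependent. -/
theorem minkowski_triangle_equality_collinear (α β : ℝ × ℝ)
    (h : minkNorm α + minkNorm β = minkNorm (α + β)) :
    ¬ LinearIndependent ℝ ![α, β] := by
  have h2 : (minkNorm α + minkNorm β) ^ 2 = (minkQ (α + β) : ℂ) := by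
    rw [h, minkNorm_sq]
  have hprod : minkNorm α * minkNorm β = ((α.1 * β.1 - α.2 * β.2 : ℝ) : ℂ) := by
    have : (2 : ℂ) * (minkNorm α * minkNorm β) =
        2 * ((α.1 * β.1 - α.2 * β.2 : ℝ) : ℂ) := by
      have e1 := minkNorm_sq α
      have e2 := minkNorm_sq β
      have : minkNorm α ^ 2 + 2 * (minkNorm α * minkNorm β) + minkNorm β ^ 2 =
          (minkQ (α + β) : ℂ) := by rw [← h2]; ring
      rw [e1, e2] at this
      have hq : minkQ (α + β) = minkQ α + minkQ β + 2 * (α.1 * β.1 - α.2 * β.2) := by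
        simp [minkQ, Prod.fst_add, Prod.snd_add]; ring
      rw [hq] at this
      push_cast at this ⊢
      linear_combination this
    have h2ne : (2 : ℂ) ≠ 0 := by norm_num
    exact mul_left_cancel₀ h2ne this
  have hsq : minkQ α * minkQ β = (α.1 * β.1 - α.2 * β.2) ^ 2 := by
    have : ((minkQ α * minkQ β : ℝ) : ℂ) = (((α.1 * β.1 - α.2 * β.2) ^ 2 : ℝ) : ℂ) := by
      push_cast
      rw [← minkNorm_sq, ← minkNorm_sq, ← mul_pow, hprod]
      push_cast; ring
    exact_mod_cast this
  have hdet : α.1 * β.2 - α.2 * β.1 = 0 := by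
    have : (α.1 * β.2 - α.2 * β.1) ^ 2 = 0 := by
      simp only [minkQ] at hsq; nlinarith [hsq]
    exact pow_eq_zero_iff (by norm_num) |>.mp this
  intro hLI
  rw [LinearIndependent.pair_iff] at hLI
  by_cases ha : α.1 ≠ 0
  · have := hLI (-β.1) α.1 (by
      apply Prod.ext <;> simp [Prod.fst_add, Prod.snd_add] <;> nlinarith [hdet])
    exact ha this.2
  · push_neg at ha
    by_cases hb : α.2 ≠ 0
    · have := hLI (-β.2) α.2 (by
        apply Prod.ext <;> simp [Prod.fst_add, Prod.snd_add] <;> nlinarith [hdet])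
      exact hb this.2
    · push_neg at hb
      have := hLI 1 0 (by
        apply Prod.ext <;> simp [Prod.fst_add, Prod.snd_add, ha, hb])
      simp at this
end

section
/- In the Poincaré half-plane model, fix l > r > 0 and real numbers D with cosh D ≤ cosh r. Define y_b = (cosh r + √((cosh r)² - (cosh D)²)) / (cosh l + √((cosh l)² - (cosh D)²)) and y_c = (cosh D)² / ((cosh r + √((cosh r)² - (cosh D)²))·(cosh l + √((cosh l)² - (cosh D)²))). Then with y_α = cosh l / cosh r, one has (y_α - y_b)·(y_α - y_c) = (cosh l / cosh r)² - 1. -/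
/-- The key computation for the hyperbolic Peaucellier inversor: the points `b` and `c`
on the vertical axis are exchanged by the Euclidean inversion in the circle of Euclidean
center `(0, cosh l / cosh r)` and radius `√((cosh l / cosh r)² - 1)`. -/
theorem hyperbolic_peaucellier_inversion (l r D : ℝ) (hr : 0 < r) (hlr : r < l)
    (hD : Real.cosh D ≤ Real.cosh r)
    (yb yc yα : ℝ)
    (hyb : yb = (Real.cosh r + Real.sqrt ((Real.cosh r) ^ 2 - (Real.cosh D) ^ 2)) /
      (Real.cosh l + Real.sqrt ((Real.cosh l) ^ 2 - (Real.cosh D) ^ 2)))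
    (hyc : yc = (Real.cosh D) ^ 2 /
      ((Real.cosh r + Real.sqrt ((Real.cosh r) ^ 2 - (Real.cosh D) ^ 2)) *
       (Real.cosh l + Real.sqrt ((Real.cosh l) ^ 2 - (Real.cosh D) ^ 2))))
    (hyα : yα = Real.cosh l / Real.cosh r) :
    (yα - yb) * (yα - yc) = (Real.cosh l / Real.cosh r) ^ 2 - 1 := by
  set cr := Real.cosh r
  set cl := Real.cosh l
  set d := Real.cosh D
  have hcr : 0 < cr := Real.cosh_pos r
  have hcl : cr < cl := Real.cosh_lt_cosh.mpr (by rw [abs_of_pos hr, abs_of_pos (hr.trans hlr)]; exact hlr)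
  have hd : d ≤ cl := hD.trans hcl.le
  have hsr2 : Real.sqrt (cr ^ 2 - d ^ 2) ^ 2 = cr ^ 2 - d ^ 2 := by
    apply Real.sq_sqrt
    nlinarith [Real.cosh_pos (x := D)]
  have hsl2 : Real.sqrt (cl ^ 2 - d ^ 2) ^ 2 = cl ^ 2 - d ^ 2 := by
    apply Real.sq_sqrt
    nlinarith [Real.cosh_pos (x := D)]
  set sr := Real.sqrt (cr ^ 2 - d ^ 2)
  set sl := Real.sqrt (cl ^ 2 - d ^ 2)
  have hsr0 : 0 ≤ sr := Real.sqrt_nonneg _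
  have hsl0 : 0 ≤ sl := Real.sqrt_nonneg _
  have h1 : 0 < cr + sr := by linarith
  have h2 : 0 < cl + sl := by linarith [hcr.trans hcl]
  have hyc' : yc = (cr - sr) / (cl + sl) := by
    rw [hyc]
    rw [div_eq_div_iff (by positivity) h2.ne']
    linear_combination (cl + sl) * hsr2
  subst hyb hyα
  rw [hyc']
  field_simp
  ring_nf
  linear_combination cr^2 * hsl2 - cr^2 * hsr2
end
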